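/- Let S = ⟨a_0,…,a_g⟩ be a numerical semigroup that is free for the arrangement (a_0,…,a_g), and assume additionally that n_i·a_i < a_{i+1} for every 1 ≤ i ≤ g−1. Then for every 1 ≤ i ≤ g−1 one has a_{i+1}/e_i ≥ c(S_i) + 1, where S_i = ⟨a_0/e_i,…,a_i/e_i⟩ and c(S_i) = Σ_{j=1}^{i} (n_j − 1)·a_j/e_i − a_0/e_i + 1; equivalently, a_{i+1} + a_0 ≥ Σ_{j=1}^{i} (n_j − 1)·a_j + 2·e_i. -/

import Mathlib

/-- `eSeq a i = gcd(a 0, …, a i)`. -/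
def eSeq (a : ℕ → ℕ) : ℕ → ℕ
  | 0 => a 0
  | i + 1 => Nat.gcd (eSeq a i) (a (i + 1))

/-- `nSeq a i = e_{i-1} / e_i` (intended for `1 ≤ i`). -/
def nSeq (a : ℕ → ℕ) (i : ℕ) : ℕ := eSeq a (i - 1) / eSeq a i

/-- `gen a i = ⟨a 0, …, a i⟩`, the set of all ℕ-linear combinations. -/
def gen (a : ℕ → ℕ) (i : ℕ) : Set ℕ :=
  {s | ∃ c : ℕ → ℕ, s = ∑ j ∈ Finset.range (i + 1), c j * a j}

/-- The semigroup `S = ⟨a 0, …, a g⟩` is free for the arrangement `(a 0, …, a g)`. -/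
def IsFreeArr (a : ℕ → ℕ) (g : ℕ) : Prop :=
  eSeq a g = 1 ∧ ∀ i, 1 ≤ i → i ≤ g → nSeq a i * a i ∈ gen a (i - 1)

/-- The truncated semigroup `S_i = ⟨a 0 / e i, …, a i / e i⟩`. -/
def trunc (a : ℕ → ℕ) (i : ℕ) : Set ℕ :=
  {s | ∃ c : ℕ → ℕ, s = ∑ j ∈ Finset.range (i + 1), c j * (a j / eSeq a i)}

/-- The conductor of a set `T ⊆ ℕ`: the least `c` with `c + ℕ ⊆ T`. -/
noncomputable def conductorOf (T : Set ℕ) : ℕ := sInf {c : ℕ | ∀ m, c ≤ m → m ∈ T}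

section Aux

variable (a : ℕ → ℕ)

lemma eSeq_pos (h0 : 0 < a 0) : ∀ i, 0 < eSeq a i
  | 0 => h0
  | i + 1 => Nat.gcd_pos_of_pos_left _ (eSeq_pos h0 i)

lemma eSeq_succ_dvd (i : ℕ) : eSeq a (i + 1) ∣ eSeq a i := Nat.gcd_dvd_left _ _

lemma eSeq_dvd_a : ∀ i j, j ≤ i → eSeq a i ∣ a j
  | 0, j, hj => by
      have : j = 0 := Nat.le_zero.mp hj
      subst this; exact dvd_refl _
  | i + 1, j, hj => by
      rcases Nat.lt_or_ge j (i + 1) with h | h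
      · exact (eSeq_succ_dvd a i).trans (eSeq_dvd_a i j (Nat.lt_succ_iff.mp h))
      · have : j = i + 1 := le_antisymm hj h
        subst this; exact Nat.gcd_dvd_right _ _

lemma nSeq_mul_eSeq (i : ℕ) : nSeq a (i + 1) * eSeq a (i + 1) = eSeq a i := by
  show eSeq a (i + 1 - 1) / eSeq a (i + 1) * eSeq a (i + 1) = eSeq a i
  simp only [Nat.add_sub_cancel]
  exact Nat.div_mul_cancel (eSeq_succ_dvd a i)

lemma nSeq_pos (h0 : 0 < a 0) (i : ℕ) : 0 < nSeq a (i + 1) := by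
  have h := nSeq_mul_eSeq a i
  have h1 := eSeq_pos a h0 i
  rcases Nat.eq_zero_or_pos (nSeq a (i + 1)) with h' | h'
  · rw [h', zero_mul] at h; omega
  · exact h'

lemma sub_one_mul_add (n x : ℕ) (h : 1 ≤ n) : (n - 1) * x + x = n * x := by
  cases n with
  | zero => omega
  | succ k => simp [Nat.succ_sub_one, Nat.succ_mul]

/-- Key representation lemma: if `e_i ∣ m` then `m ≡ ∑ c_j a_j (mod a_0)`
with `0 ≤ c_j < n_j`. -/
lemma rep (h0 : 0 < a 0) : ∀ i, ∀ m : ℤ, (eSeq a i : ℤ) ∣ m →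
    ∃ c : ℕ → ℕ, (∀ j, 1 ≤ j → j ≤ i → c j < nSeq a j) ∧
      (a 0 : ℤ) ∣ m - ∑ j ∈ Finset.Icc 1 i, (c j : ℤ) * a j
  | 0, m, hm => by
      refine ⟨fun _ => 0, by omega, ?_⟩
      simpa [eSeq] using hm
  | i + 1, m, hm => by
      set e : ℕ := eSeq a i with he
      set e' : ℕ := eSeq a (i + 1) with he'
      set b : ℕ := a (i + 1) with hb
      set n : ℕ := nSeq a (i + 1) with hn
      have hnpos : 0 < n := nSeq_pos a h0 i
      have hgcd : Nat.gcd e b = e' := rfl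
      have hbez : (e' : ℤ) = e * Nat.gcdA e b + b * Nat.gcdB e b := by
        rw [← hgcd]; exact Nat.gcd_eq_gcd_ab e b
      obtain ⟨t, ht⟩ := hm
      set k : ℤ := t * Nat.gcdB e b with hk
      have hdvd1 : (e : ℤ) ∣ m - k * b := by
        refine ⟨t * Nat.gcdA e b, ?_⟩
        rw [ht, hbez]; ring
      set k' : ℤ := k % (n : ℤ) with hk'
      have hk'0 : 0 ≤ k' := Int.emod_nonneg k (by exact_mod_cast hnpos.ne')
      have hk'n : k' < (n : ℤ) := Int.emod_lt_of_pos k (by exact_mod_cast hnpos)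
      have hnb : (e : ℤ) ∣ (n : ℤ) * b := by
        have hd : e' ∣ b := Nat.gcd_dvd_right e b
        obtain ⟨s, hs⟩ := hd
        refine ⟨s, ?_⟩
        have hne := nSeq_mul_eSeq a i
        push_cast [hs]
        rw [← mul_assoc]
        norm_cast
        rw [hne]
      have hdvd2 : (e : ℤ) ∣ m - k' * b := by
        have hkk : k - k' = (n : ℤ) * (k / n) := by
          rw [hk', Int.emod_def]; ring
        have heq : m - k' * b = (m - k * b) + (k / n) * ((n : ℤ) * b) := by
          rw [← mul_assoc]
          have : (k / (n : ℤ)) * n = k - k' := by rw [hkk]; ring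
          rw [this]; ring
        rw [heq]
        exact dvd_add hdvd1 (Dvd.dvd.mul_left hnb _)
      obtain ⟨c, hc, hcd⟩ := rep h0 i (m - k' * b) hdvd2
      refine ⟨Function.update c (i + 1) k'.toNat, ?_, ?_⟩
      · intro j hj1 hj2
        rcases Nat.lt_or_ge j (i + 1) with h | h
        · rw [Function.update_of_ne (by omega)]
          exact hc j hj1 (by omega)
        · have hj : j = i + 1 := by omega
          subst hj
          rw [Function.update_self]
          have : (k'.toNat : ℤ) < (n : ℤ) := by rwa [Int.toNat_of_nonneg hk'0]
          exact_mod_cast this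
      · rw [Finset.sum_Icc_succ_top (by omega : 1 ≤ i + 1)]
        have hsum : ∑ j ∈ Finset.Icc 1 i, ((Function.update c (i + 1) k'.toNat j : ℕ) : ℤ) * a j
            = ∑ j ∈ Finset.Icc 1 i, (c j : ℤ) * a j := by
          refine Finset.sum_congr rfl fun j hj => ?_
          have : j ≠ i + 1 := by
            have := Finset.mem_Icc.mp hj; omega
          rw [Function.update_of_ne this]
        rw [hsum, Function.update_self, Int.toNat_of_nonneg hk'0]
        have heq2 : m - (∑ j ∈ Finset.Icc 1 i, (c j : ℤ) * a j + k' * a (i + 1))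
            = (m - k' * b) - ∑ j ∈ Finset.Icc 1 i, (c j : ℤ) * a j := by
          rw [hb]; ring
        rw [heq2]
        exact hcd

/-- Membership in the truncated semigroup beyond the conductor bound. -/
lemma mem_trunc (h0 : 0 < a 0) (i : ℕ) (m : ℕ)
    (hm : ∑ j ∈ Finset.Icc 1 i, (nSeq a j - 1) * (a j / eSeq a i) < m + a 0 / eSeq a i) :
    m ∈ trunc a i := by
  have hepos : 0 < eSeq a i := eSeq_pos a h0 i
  obtain ⟨c, hc, hcd⟩ := rep a h0 i ((eSeq a i : ℤ) * m) ⟨m, rfl⟩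
  have haj : ∀ j ≤ i, (eSeq a i) * (a j / eSeq a i) = a j :=
    fun j hj => Nat.mul_div_cancel' (eSeq_dvd_a a i j hj)
  have hsum : ∑ j ∈ Finset.Icc 1 i, (c j : ℤ) * a j
      = (eSeq a i : ℤ) * ∑ j ∈ Finset.Icc 1 i, (c j : ℤ) * ((a j / eSeq a i : ℕ) : ℤ) := by
    rw [Finset.mul_sum]
    refine Finset.sum_congr rfl fun j hj => ?_
    have hj' := Finset.mem_Icc.mp hj
    have hcast : ((a j : ℕ) : ℤ) = (eSeq a i : ℤ) * ((a j / eSeq a i : ℕ) : ℤ) := by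
      exact_mod_cast (haj j hj'.2).symm
    rw [hcast]; ring
  have ha0 : eSeq a i * (a 0 / eSeq a i) = a 0 :=
    Nat.mul_div_cancel' (eSeq_dvd_a a i 0 (Nat.zero_le i))
  have ha0c : ((a 0 : ℕ) : ℤ) = (eSeq a i : ℤ) * ((a 0 / eSeq a i : ℕ) : ℤ) := by
    exact_mod_cast ha0.symm
  obtain ⟨q, hq⟩ := hcd
  rw [hsum, ha0c] at hq
  have hq' : (m : ℤ) - ∑ j ∈ Finset.Icc 1 i, (c j : ℤ) * ((a j / eSeq a i : ℕ) : ℤ)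
      = ((a 0 / eSeq a i : ℕ) : ℤ) * q := by
    have hecast : (eSeq a i : ℤ) ≠ 0 := by exact_mod_cast hepos.ne'
    apply mul_left_cancel₀ hecast
    rw [mul_sub, hq]; ring
  have hbound : ∑ j ∈ Finset.Icc 1 i, (c j : ℤ) * ((a j / eSeq a i : ℕ) : ℤ)
      ≤ ∑ j ∈ Finset.Icc 1 i, ((nSeq a j - 1 : ℕ) : ℤ) * ((a j / eSeq a i : ℕ) : ℤ) := by
    refine Finset.sum_le_sum fun j hj => ?_
    have hj' := Finset.mem_Icc.mp hj
    have hcj := hc j hj'.1 hj'.2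
    have hle : (c j : ℤ) ≤ ((nSeq a j - 1 : ℕ) : ℤ) := by
      exact_mod_cast Nat.le_sub_one_of_lt hcj
    exact mul_le_mul_of_nonneg_right hle (by positivity)
  have h2 : (∑ j ∈ Finset.Icc 1 i, ((nSeq a j - 1 : ℕ) : ℤ) * ((a j / eSeq a i : ℕ) : ℤ))
      < (m : ℤ) + ((a 0 / eSeq a i : ℕ) : ℤ) := by exact_mod_cast hm
  have hqnn : 0 ≤ q := by
    by_contra hqneg
    push_neg at hqneg
    have hq1 : q ≤ -1 := by omega
    have ha0pos' : (0 : ℤ) < ((a 0 / eSeq a i : ℕ) : ℤ) := by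
      have : 0 < a 0 / eSeq a i :=
        Nat.div_pos (Nat.le_of_dvd h0 (eSeq_dvd_a a i 0 (Nat.zero_le i))) hepos
      exact_mod_cast this
    nlinarith [hq', hbound, h2]
  -- build the coefficient function
  refine ⟨fun j => if j = 0 then q.toNat else c j, ?_⟩
  have hrange : Finset.range (i + 1) = insert 0 (Finset.Icc 1 i) := by
    ext x; simp only [Finset.mem_range, Finset.mem_insert, Finset.mem_Icc]; omega
  rw [hrange, Finset.sum_insert (by simp)]
  have hcongr : ∑ j ∈ Finset.Icc 1 i, (if j = 0 then q.toNat else c j) * (a j / eSeq a i)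
      = ∑ j ∈ Finset.Icc 1 i, c j * (a j / eSeq a i) := by
    refine Finset.sum_congr rfl fun j hj => ?_
    have hj' := Finset.mem_Icc.mp hj
    simp [Nat.one_le_iff_ne_zero.mp hj'.1]
  rw [hcongr]
  simp only [if_pos rfl]
  have hZ : (m : ℤ) = (q.toNat : ℤ) * ((a 0 / eSeq a i : ℕ) : ℤ)
      + ∑ j ∈ Finset.Icc 1 i, (c j : ℤ) * ((a j / eSeq a i : ℕ) : ℤ) := by
    rw [Int.toNat_of_nonneg hqnn]
    linarith [hq']
  exact_mod_cast hZ

/-- The second inequality, by induction. -/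
lemma key2 (g : ℕ) (h0 : 0 < a 0) (hpos : ∀ i, i ≤ g → 0 < a i)
    (hcond : ∀ i, 1 ≤ i → i ≤ g - 1 → nSeq a i * a i < a (i + 1)) :
    ∀ i, 1 ≤ i → i ≤ g - 1 →
      (∑ j ∈ Finset.Icc 1 i, (nSeq a j - 1) * a j) + 2 * eSeq a i ≤ a (i + 1) + a 0 := by
  intro i
  induction i with
  | zero => omega
  | succ i ih =>
    intro _ hig
    rcases Nat.eq_zero_or_pos i with hi0 | hi1
    · subst hi0
      simp only [zero_add] at *
      simp only [Finset.Icc_self, Finset.sum_singleton]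
      have hn1 : 0 < nSeq a 1 := nSeq_pos a h0 0
      have hmul : (nSeq a 1 - 1) * a 1 + a 1 = nSeq a 1 * a 1 := sub_one_mul_add _ _ hn1
      have hc := hcond 1 le_rfl hig
      have he0 : eSeq a 1 ≤ a 0 := Nat.le_of_dvd h0 (eSeq_dvd_a a 1 0 (by omega))
      have he1 : eSeq a 1 ≤ a 1 := by
        have := eSeq_dvd_a a 1 1 le_rfl
        have hpos1 : 0 < a 1 := hpos 1 (by omega)
        exact Nat.le_of_dvd hpos1 this
      omega
    · have ih' := ih hi1 (by omega)
      rw [Finset.sum_Icc_succ_top (by omega : 1 ≤ i + 1)]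
      have hn : 0 < nSeq a (i + 1) := nSeq_pos a h0 i
      have hmul : (nSeq a (i + 1) - 1) * a (i + 1) + a (i + 1)
          = nSeq a (i + 1) * a (i + 1) := sub_one_mul_add _ _ hn
      have hc := hcond (i + 1) (by omega) hig
      have hee : eSeq a (i + 1) ≤ eSeq a i :=
        Nat.le_of_dvd (eSeq_pos a h0 i) (eSeq_succ_dvd a i)
      omega

end Aux

theorem stmt_10 (g : ℕ) (a : ℕ → ℕ) (hpos : ∀ i, i ≤ g → 0 < a i)
    (hfree : IsFreeArr a g)
    (hcond : ∀ i, 1 ≤ i → i ≤ g - 1 → nSeq a i * a i < a (i + 1)) :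
    ∀ i, 1 ≤ i → i ≤ g - 1 →
      a (i + 1) ≥ eSeq a i * (conductorOf (trunc a i) + 1) ∧
      a (i + 1) + a 0 ≥
        (∑ j ∈ Finset.Icc 1 i, (nSeq a j - 1) * a j) + 2 * eSeq a i := by
  intro i hi1 hig
  have hg2 : 2 ≤ g := by omega
  have h0 : 0 < a 0 := hpos 0 (by omega)
  have hepos : 0 < eSeq a i := eSeq_pos a h0 i
  have hkey := key2 a g h0 hpos hcond i hi1 hig
  refine ⟨?_, hkey⟩
  set S : ℕ := ∑ j ∈ Finset.Icc 1 i, (nSeq a j - 1) * (a j / eSeq a i) with hS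
  set A0 : ℕ := a 0 / eSeq a i with hA
  set c0 : ℕ := S + 1 - A0 with hc0
  have hmem : c0 ∈ {c : ℕ | ∀ m, c ≤ m → m ∈ trunc a i} := by
    intro m hm
    exact mem_trunc a h0 i m (by omega)
  have hcle : conductorOf (trunc a i) ≤ c0 := Nat.sInf_le hmem
  have hSe : eSeq a i * S = ∑ j ∈ Finset.Icc 1 i, (nSeq a j - 1) * a j := by
    rw [hS, Finset.mul_sum]
    refine Finset.sum_congr rfl fun j hj => ?_
    have hj' := Finset.mem_Icc.mp hj
    rw [mul_left_comm, Nat.mul_div_cancel' (eSeq_dvd_a a i j hj'.2)]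
  have hAe : eSeq a i * A0 = a 0 := Nat.mul_div_cancel' (eSeq_dvd_a a i 0 (Nat.zero_le i))
  have hea : eSeq a i ≤ a (i + 1) := by
    have hd : eSeq a i ∣ a i := eSeq_dvd_a a i i le_rfl
    have h1 : eSeq a i ≤ a i := Nat.le_of_dvd (hpos i (by omega)) hd
    have hc := hcond i hi1 hig
    obtain ⟨k, rfl⟩ : ∃ k, i = k + 1 := ⟨i - 1, by omega⟩
    have hn : 0 < nSeq a (k + 1) := nSeq_pos a h0 k
    have h2 : a (k + 1) ≤ nSeq a (k + 1) * a (k + 1) := Nat.le_mul_of_pos_left _ hn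
    omega
  calc eSeq a i * (conductorOf (trunc a i) + 1)
      ≤ eSeq a i * (c0 + 1) := Nat.mul_le_mul_left _ (by omega)
    _ ≤ a (i + 1) := by
        rcases le_or_gt A0 (S + 1) with h | h
        · have heq : c0 + 1 = (S + 2) - A0 := by omega
          rw [heq, Nat.mul_sub, Nat.mul_add, hSe, hAe]
          omega
        · have heq : c0 = 0 := by omega
          rw [heq]
          simpa using hea
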